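/- Let F = (ℝ^d, ‖·‖) be a finite-dimensional Banach space, E ⊆ F a linear subspace, P ∈ M_d(ℝ) the matrix of the orthogonal projection onto E, and A ∈ M_d(ℝ) a matrix with AP = PAP. Then for every projection matrix Q with range E, Tr(AP) = Tr(AQ) ≤ ν₁(A)·‖Q‖_{L(F)}, where ν₁ is the 1-nuclear norm on L(F). In particular, Tr(AP) ≤ ν₁(A)·λ(E,F). -/

import Mathlib

noncomputable section

/-- The operator on the `d`-dimensional Banach space `F` (identified with `ℝ^d` via the
linear equivalence `φ`) induced by a `d × d` matrix `A`. -/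
def matOp (d : ℕ) (F : Type) [NormedAddCommGroup F] [NormedSpace ℝ F]
    [FiniteDimensional ℝ F] (φ : F ≃ₗ[ℝ] (Fin d → ℝ))
    (A : Matrix (Fin d) (Fin d) ℝ) : F →L[ℝ] F :=
  LinearMap.toContinuousLinearMap ((φ.symm.toLinearMap ∘ₗ A.mulVecLin) ∘ₗ φ.toLinearMap)

/-- The 1-nuclear norm `ν₁(A)` of a matrix `A` acting on the Banach space `F`:
the infimum of `Σ ‖f_i‖_{F*}·‖x_i‖_F` over all rank-one decompositions
`A = Σ f_i ⊗ x_i`. -/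
def nuclearNorm (d : ℕ) (F : Type) [NormedAddCommGroup F] [NormedSpace ℝ F]
    [FiniteDimensional ℝ F] (φ : F ≃ₗ[ℝ] (Fin d → ℝ))
    (A : Matrix (Fin d) (Fin d) ℝ) : ℝ :=
  sInf {c : ℝ | ∃ (m : ℕ) (g : Fin m → StrongDual ℝ F) (x : Fin m → F),
    (∀ v : F, matOp d F φ A v = ∑ i, g i v • x i) ∧ c = ∑ i, ‖g i‖ * ‖x i‖}

end

section Aux

variable {d : ℕ} {F : Type} [NormedAddCommGroup F] [NormedSpace ℝ F]
  [FiniteDimensional ℝ F] (φ : F ≃ₗ[ℝ] (Fin d → ℝ))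

lemma matOp_apply (A : Matrix (Fin d) (Fin d) ℝ) (v : F) :
    matOp d F φ A v = φ.symm (A.mulVec (φ v)) := rfl

lemma trace_matOp (A : Matrix (Fin d) (Fin d) ℝ) :
    LinearMap.trace ℝ F (matOp d F φ A : F →ₗ[ℝ] F) = A.trace := by
  have h : (matOp d F φ A : F →ₗ[ℝ] F) = φ.symm.conj A.mulVecLin := by
    ext v; simp [matOp_apply, LinearEquiv.conj_apply]
  rw [h, LinearMap.trace_conj']
  rw [LinearMap.trace_eq_matrix_trace ℝ (Pi.basisFun ℝ (Fin d)),
    LinearMap.toMatrix_eq_toMatrix', ← Matrix.toLin'_apply' A,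
    LinearMap.toMatrix'_toLin']

lemma matOp_mul (A B : Matrix (Fin d) (Fin d) ℝ) (v : F) :
    matOp d F φ (A * B) v = matOp d F φ A (matOp d F φ B v) := by
  simp [matOp_apply, Matrix.mulVec_mulVec]

/-- Key trace bound: `Tr(AB) ≤ ν₁(A) ‖matOp B‖` for any `B`. -/
lemma trace_mul_le (A B : Matrix (Fin d) (Fin d) ℝ) :
    (A * B).trace ≤ nuclearNorm d F φ A * ‖matOp d F φ B‖ := by
  -- the set is nonempty
  have hne : {c : ℝ | ∃ (m : ℕ) (g : Fin m → StrongDual ℝ F) (x : Fin m → F),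
      (∀ v : F, matOp d F φ A v = ∑ i, g i v • x i) ∧
        c = ∑ i, ‖g i‖ * ‖x i‖}.Nonempty := by
    refine ⟨∑ i, ‖(LinearMap.toContinuousLinearMap
        ((LinearMap.proj i : (Fin d → ℝ) →ₗ[ℝ] ℝ) ∘ₗ φ.toLinearMap) :
        StrongDual ℝ F)‖ * ‖φ.symm (A.mulVec (Pi.single i 1))‖, d,
      fun i => LinearMap.toContinuousLinearMap
        ((LinearMap.proj i : (Fin d → ℝ) →ₗ[ℝ] ℝ) ∘ₗ φ.toLinearMap),
      fun i => φ.symm (A.mulVec (Pi.single i 1)), fun v => ?_, rfl⟩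
    rw [matOp_apply]
    have : A.mulVec (φ v) = ∑ i, (φ v i) • A.mulVec (Pi.single i 1) := by
      have hv : (φ v) = ∑ i, (φ v i) • (Pi.single i 1 : Fin d → ℝ) := by
        ext j; simp [Pi.single_apply, eq_comm]
      conv_lhs => rw [hv]
      rw [← Matrix.mulVecLin_apply, map_sum]
      simp
    rw [this, map_sum]
    simp [LinearMap.toContinuousLinearMap]
  -- every element of the set is nonneg and gives a bound
  have hbound : ∀ c ∈ {c : ℝ | ∃ (m : ℕ) (g : Fin m → StrongDual ℝ F)
      (x : Fin m → F), (∀ v : F, matOp d F φ A v = ∑ i, g i v • x i) ∧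
        c = ∑ i, ‖g i‖ * ‖x i‖},
      (A * B).trace ≤ c * ‖matOp d F φ B‖ ∧ 0 ≤ c := by
    rintro c ⟨m, g, x, hdec, rfl⟩
    constructor
    · have htr : (A * B).trace = ∑ i, g i (matOp d F φ B (x i)) := by
        rw [← trace_matOp φ (A * B)]
        have h : ((matOp d F φ (A * B) : F →ₗ[ℝ] F)) =
            ∑ i, dualTensorHom ℝ F F
              (((g i).toLinearMap ∘ₗ (matOp d F φ B : F →ₗ[ℝ] F)) ⊗ₜ x i) := by
          ext v
          simp only [LinearMap.sum_apply, dualTensorHom_apply, LinearMap.coe_comp,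
            Function.comp_apply, ContinuousLinearMap.coe_coe]
          rw [matOp_mul φ A B, hdec]
        rw [h, map_sum]
        refine Finset.sum_congr rfl fun i _ => ?_
        rw [LinearMap.trace_eq_contract_apply]
        simp
      rw [htr, Finset.sum_mul]
      refine Finset.sum_le_sum fun i _ => ?_
      calc g i (matOp d F φ B (x i)) ≤ ‖g i (matOp d F φ B (x i))‖ := le_abs_self _
        _ ≤ ‖g i‖ * ‖matOp d F φ B (x i)‖ := (g i).le_opNorm _
        _ ≤ ‖g i‖ * (‖matOp d F φ B‖ * ‖x i‖) := by
            exact mul_le_mul_of_nonneg_left ((matOp d F φ B).le_opNorm _) (norm_nonneg _)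
        _ = ‖g i‖ * ‖x i‖ * ‖matOp d F φ B‖ := by ring
    · exact Finset.sum_nonneg fun i _ => mul_nonneg (norm_nonneg _) (norm_nonneg _)
  -- conclude
  rcases le_or_gt ‖matOp d F φ B‖ 0 with h0 | h0
  · have h0' : ‖matOp d F φ B‖ = 0 := le_antisymm h0 (norm_nonneg _)
    rcases hne with ⟨c, hc⟩
    have := (hbound c hc).1
    rw [h0', mul_zero] at this ⊢
    exact this
  · rw [← div_le_iff₀ h0]
    simp only [nuclearNorm]
    apply le_csInf hne
    intro c hc
    rw [div_le_iff₀ h0]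
    exact (hbound c hc).1

end Aux

/-- if `P` is the (Euclidean) orthogonal projection matrix onto the
subspace `E = range P`, `A` satisfies `AP = PAP`, and `Q` is any projection matrix
with range `E`, then `Tr(AP) = Tr(AQ) ≤ ν₁(A)·‖Q‖_{L(F)}`; in particular
`Tr(AP) ≤ ν₁(A)·λ(E,F)`. -/
theorem trace_duality_projection (d : ℕ) (F : Type) [NormedAddCommGroup F]
    [NormedSpace ℝ F] [FiniteDimensional ℝ F] (φ : F ≃ₗ[ℝ] (Fin d → ℝ))
    (A P Q : Matrix (Fin d) (Fin d) ℝ)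
    (hPsymm : P.transpose = P) (hPproj : P * P = P)
    (hQproj : Q * Q = Q)
    (hQrange : LinearMap.range Q.mulVecLin = LinearMap.range P.mulVecLin)
    (hA : A * P = P * A * P) :
    (A * P).trace = (A * Q).trace ∧
    (A * Q).trace ≤ nuclearNorm d F φ A * ‖matOp d F φ Q‖ ∧
    (A * P).trace ≤ nuclearNorm d F φ A *
      sInf {c : ℝ | ∃ Q' : Matrix (Fin d) (Fin d) ℝ, Q' * Q' = Q' ∧
        LinearMap.range Q'.mulVecLin = LinearMap.range P.mulVecLin ∧
        c = ‖matOp d F φ Q'‖} := by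
  -- From range equality and idempotency: P * Q' = Q' and Q' * P = P
  have key : ∀ Q' : Matrix (Fin d) (Fin d) ℝ, Q' * Q' = Q' →
      LinearMap.range Q'.mulVecLin = LinearMap.range P.mulVecLin →
      (A * P).trace = (A * Q').trace := by
    intro Q' hQ'proj hQ'range
    have hPQ : P * Q' = Q' := by
      have : ∀ v, P.mulVec (Q'.mulVec v) = Q'.mulVec v := by
        intro v
        have hmem : Q'.mulVec v ∈ LinearMap.range P.mulVecLin := by
          rw [← hQ'range]; exact ⟨v, rfl⟩
        obtain ⟨y, hy⟩ := hmem
        simp only [Matrix.mulVecLin_apply] at hy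
        rw [← hy, Matrix.mulVec_mulVec, hPproj]
      have hlin : Matrix.toLin' (P * Q') = Matrix.toLin' Q' := by
        rw [Matrix.toLin'_apply', Matrix.toLin'_apply']
        apply LinearMap.ext; intro v
        rw [Matrix.mulVecLin_apply, Matrix.mulVecLin_apply, ← Matrix.mulVec_mulVec, this v]
      exact Matrix.toLin'.injective hlin
    have hQP : Q' * P = P := by
      have : ∀ v, Q'.mulVec (P.mulVec v) = P.mulVec v := by
        intro v
        have hmem : P.mulVec v ∈ LinearMap.range Q'.mulVecLin := by
          rw [hQ'range]; exact ⟨v, rfl⟩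
        obtain ⟨y, hy⟩ := hmem
        simp only [Matrix.mulVecLin_apply] at hy
        rw [← hy, Matrix.mulVec_mulVec, hQ'proj]
      have hlin : Matrix.toLin' (Q' * P) = Matrix.toLin' P := by
        rw [Matrix.toLin'_apply', Matrix.toLin'_apply']
        apply LinearMap.ext; intro v
        rw [Matrix.mulVecLin_apply, Matrix.mulVecLin_apply, ← Matrix.mulVec_mulVec, this v]
      exact Matrix.toLin'.injective hlin
    -- Tr(AQ') = Tr(A P Q') = Tr(PAPQ') = Tr(APQ'P) = Tr(AP(Q'P)) = Tr(APP) = Tr(AP)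
    calc (A * P).trace = (A * P * (Q' * P)).trace := by rw [hQP, mul_assoc, hPproj]
      _ = (A * P * Q' * P).trace := by rw [mul_assoc (A*P)]
      _ = (P * (A * P * Q')).trace := (Matrix.trace_mul_comm _ _)
      _ = (P * A * P * Q').trace := by rw [← mul_assoc, ← mul_assoc]
      _ = (A * P * Q').trace := by rw [← hA]
      _ = (A * Q').trace := by rw [mul_assoc, hPQ]
  have h1 : (A * P).trace = (A * Q).trace := key Q hQproj hQrange
  have h2 : (A * Q).trace ≤ nuclearNorm d F φ A * ‖matOp d F φ Q‖ := trace_mul_le φ A Q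
  refine ⟨h1, h2, ?_⟩
  -- nuclearNorm nonneg
  have hν : 0 ≤ nuclearNorm d F φ A := by
    apply Real.sInf_nonneg
    rintro c ⟨m, g, x, _, rfl⟩
    exact Finset.sum_nonneg fun i _ => mul_nonneg (norm_nonneg _) (norm_nonneg _)
  set S := {c : ℝ | ∃ Q' : Matrix (Fin d) (Fin d) ℝ, Q' * Q' = Q' ∧
      LinearMap.range Q'.mulVecLin = LinearMap.range P.mulVecLin ∧
      c = ‖matOp d F φ Q'‖} with hS
  have hSne : S.Nonempty := ⟨‖matOp d F φ P‖, P, hPproj, rfl, rfl⟩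
  have hSbd : ∀ c ∈ S, (A * P).trace ≤ nuclearNorm d F φ A * c := by
    rintro c ⟨Q', hQ'proj, hQ'range, rfl⟩
    rw [key Q' hQ'proj hQ'range]
    exact trace_mul_le φ A Q'
  rcases eq_or_lt_of_le hν with hν0 | hν0
  · rcases hSne with ⟨c, hc⟩
    have := hSbd c hc
    rw [← hν0, zero_mul] at this ⊢
    exact this
  · rw [mul_comm, ← div_le_iff₀ hν0, hS]
    apply le_csInf hSne
    intro c hc
    rw [div_le_iff₀ hν0, mul_comm]
    exact hSbd c hc
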